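/- Let k ≥ 1, m > 0, σ > 0 with σ/m ≤ 1/2, and let y_1 ≠ y_2 ∈ ℝ^k. If ‖y_1 − y_2‖_2 < (4/Ω) · arcsin((σ/m)^{1/2}), then there exist â > 0 and ŷ ∈ ℝ^k such that |â e^{i ŷ·ω} − m e^{i y_1·ω} − m e^{i y_2·ω}| < 2σ for all ω ∈ ℝ^k with ‖ω‖_2 ≤ Ω. Consequently, the one-source measure μ̂ = â δ_{ŷ} is a σ-admissible measure of the image Y(ω) = F[μ](ω) + W(ω) of μ = m δ_{y_1} + m δ_{y_2} with the noise W(ω) = (F[μ̂](ω) − F[μ](ω))/2, which satisfies |W(ω)| < σ for all ‖ω‖_2 ≤ Ω. -/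

import Mathlib

/-- **Below the diffraction limit a single source is admissible (Theorem 4.2, upper part).**
Let `k ≥ 1`, `0 < σ/m ≤ 1/2` and `y₁ ≠ y₂ ∈ ℝ^k` with
`‖y₁ − y₂‖ < (4/Ω) arcsin((σ/m)^{1/2})`.  Then there are `â > 0` and `ŷ ∈ ℝ^k` with
`|â e^{i ŷ·ω} − m e^{i y₁·ω} − m e^{i y₂·ω}| < 2σ` for all `‖ω‖ ≤ Ω`; consequently,
with `W(ω) = (F[μ̂](ω) − F[μ](ω))/2` one has `|W(ω)| < σ` on `‖ω‖ ≤ Ω` and the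
one-source measure `μ̂ = â δ_{ŷ}` is a σ-admissible measure of `Y = F[μ] + W`. -/
theorem one_source_admissible_below_diffraction_limit
    (k : ℕ) (hk : 1 ≤ k) (Ω σ m : ℝ) (hΩ : 0 < Ω) (hσ : 0 < σ) (hm : 0 < m)
    (hratio : σ / m ≤ 1 / 2)
    (y₁ y₂ : EuclideanSpace ℝ (Fin k)) (hy : y₁ ≠ y₂)
    (hsep : ‖y₁ - y₂‖ < 4 / Ω * Real.arcsin (Real.sqrt (σ / m))) :
    ∃ (ah : ℝ) (_ : 0 < ah) (yh : EuclideanSpace ℝ (Fin k)),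
      (∀ ω : EuclideanSpace ℝ (Fin k), ‖ω‖ ≤ Ω →
        Norm.norm
          ((ah : ℂ) * Complex.exp (Complex.I * ((inner ℝ yh ω : ℝ) : ℂ))
            - (m : ℂ) * Complex.exp (Complex.I * ((inner ℝ y₁ ω : ℝ) : ℂ))
            - (m : ℂ) * Complex.exp (Complex.I * ((inner ℝ y₂ ω : ℝ) : ℂ))) < 2 * σ) ∧
      (∀ ω : EuclideanSpace ℝ (Fin k), ‖ω‖ ≤ Ω →
        Norm.norm
          (((ah : ℂ) * Complex.exp (Complex.I * ((inner ℝ yh ω : ℝ) : ℂ))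
            - ((m : ℂ) * Complex.exp (Complex.I * ((inner ℝ y₁ ω : ℝ) : ℂ))
              + (m : ℂ) * Complex.exp (Complex.I * ((inner ℝ y₂ ω : ℝ) : ℂ)))) / 2) < σ) ∧
      (∀ ω : EuclideanSpace ℝ (Fin k), ‖ω‖ ≤ Ω →
        Norm.norm
          ((ah : ℂ) * Complex.exp (Complex.I * ((inner ℝ yh ω : ℝ) : ℂ))
            - (((m : ℂ) * Complex.exp (Complex.I * ((inner ℝ y₁ ω : ℝ) : ℂ))
                + (m : ℂ) * Complex.exp (Complex.I * ((inner ℝ y₂ ω : ℝ) : ℂ)))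
              + ((ah : ℂ) * Complex.exp (Complex.I * ((inner ℝ yh ω : ℝ) : ℂ))
                - ((m : ℂ) * Complex.exp (Complex.I * ((inner ℝ y₁ ω : ℝ) : ℂ))
                  + (m : ℂ) * Complex.exp (Complex.I * ((inner ℝ y₂ ω : ℝ) : ℂ)))) / 2)) < σ) := by
  set A := Real.arcsin (Real.sqrt (σ / m)) with hAdef
  have hσm0 : 0 ≤ σ / m := by positivity
  have hσm1 : Real.sqrt (σ / m) ≤ 1 := Real.sqrt_le_one.mpr (le_trans hratio (by norm_num))
  have hsinA : Real.sin A = Real.sqrt (σ / m) :=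
    Real.sin_arcsin (by linarith [Real.sqrt_nonneg (σ / m)]) hσm1
  have hsin2 : Real.sin A ^ 2 = σ / m := by rw [hsinA]; exact Real.sq_sqrt hσm0
  have hcos2A : Real.cos (2 * A) = 1 - 2 * (σ / m) := by
    rw [Real.cos_two_mul', ← hsin2]
    nlinarith [Real.sin_sq_add_cos_sq A]
  have hAhalf : A ≤ Real.pi / 2 := Real.arcsin_le_pi_div_two _
  set T := Ω * ‖y₁ - y₂‖ / 2 with hTdef
  have hT0 : 0 ≤ T := by
    have := norm_nonneg (y₁ - y₂); positivity
  have hTlt : T < 2 * A := by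
    have h := hsep
    rw [div_mul_eq_mul_div, lt_div_iff₀ hΩ] at h
    rw [hTdef]; nlinarith
  have hcosTgt : Real.cos (2 * A) < Real.cos T :=
    Real.cos_lt_cos_of_nonneg_of_le_pi hT0 (by linarith) hTlt
  have hmσ : m * (σ / m) = σ := by field_simp
  have hahpos : 0 < m * (1 + Real.cos T) := by nlinarith
  refine ⟨m * (1 + Real.cos T), hahpos, (1/2 : ℝ) • (y₁ + y₂), ?_⟩
  have key : ∀ ω : EuclideanSpace ℝ (Fin k), ‖ω‖ ≤ Ω →
      Norm.norm
        ((↑(m * (1 + Real.cos T)) : ℂ) *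
            Complex.exp (Complex.I * ((inner ℝ ((1/2 : ℝ) • (y₁ + y₂)) ω : ℝ) : ℂ))
          - (m : ℂ) * Complex.exp (Complex.I * ((inner ℝ y₁ ω : ℝ) : ℂ))
          - (m : ℂ) * Complex.exp (Complex.I * ((inner ℝ y₂ ω : ℝ) : ℂ))) < 2 * σ := by
    intro ω hω
    set u : ℝ := inner ℝ ((1/2 : ℝ) • (y₁ + y₂)) ω with hu
    set t : ℝ := (inner ℝ y₁ ω - inner ℝ y₂ ω) / 2 with htd
    have h1 : (inner ℝ y₁ ω : ℝ) = u + t := by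
      rw [hu, real_inner_smul_left, inner_add_left, htd]; ring
    have h2 : (inner ℝ y₂ ω : ℝ) = u - t := by
      rw [hu, real_inner_smul_left, inner_add_left, htd]; ring
    have htb : |t| ≤ T := by
      have hcs : |(inner ℝ (y₁ - y₂) ω : ℝ)| ≤ ‖y₁ - y₂‖ * ‖ω‖ := abs_real_inner_le_norm _ _
      rw [inner_sub_left] at hcs
      have h2 : ‖y₁ - y₂‖ * ‖ω‖ ≤ ‖y₁ - y₂‖ * Ω :=
        mul_le_mul_of_nonneg_left hω (norm_nonneg _)
      rw [htd, abs_div]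
      rw [show |(2:ℝ)| = 2 by norm_num, div_le_iff₀ (by norm_num : (0:ℝ) < 2), hTdef]
      calc |(inner ℝ y₁ ω : ℝ) - inner ℝ y₂ ω| ≤ ‖y₁ - y₂‖ * Ω := le_trans hcs h2
        _ = Ω * ‖y₁ - y₂‖ / 2 * 2 := by ring
    have hcost : Real.cos T ≤ Real.cos t := by
      rw [← Real.cos_abs t]
      exact Real.cos_le_cos_of_nonneg_of_le_pi (abs_nonneg t) (by linarith) htb
    have hcost1 : Real.cos t ≤ 1 := Real.cos_le_one t
    have hreal : |m * (1 + Real.cos T) - 2 * m * Real.cos t| < 2 * σ := by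
      rw [abs_lt]; constructor <;> nlinarith
    have hid : (↑(m * (1 + Real.cos T)) : ℂ) * Complex.exp (Complex.I * (u : ℂ))
        - (m : ℂ) * Complex.exp (Complex.I * ((↑(u + t) : ℝ) : ℂ))
        - (m : ℂ) * Complex.exp (Complex.I * ((↑(u - t) : ℝ) : ℂ))
        = Complex.exp (Complex.I * (u : ℂ)) *
            ((↑(m * (1 + Real.cos T) - 2 * m * Real.cos t) : ℝ) : ℂ) := by
      have e1 : Complex.I * ((↑(u + t) : ℝ) : ℂ) = Complex.I * (u : ℂ) + (t : ℂ) * Complex.I := by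
        push_cast; ring
      have e2 : Complex.I * ((↑(u - t) : ℝ) : ℂ) = Complex.I * (u : ℂ) + (-t : ℂ) * Complex.I := by
        push_cast; ring
      rw [e1, e2, Complex.exp_add, Complex.exp_add, Complex.exp_mul_I, Complex.exp_mul_I,
        Complex.cos_neg, Complex.sin_neg, ← Complex.ofReal_cos]
      push_cast
      ring
    rw [h1, h2, hid, norm_mul]
    rw [mul_comm Complex.I, Complex.norm_exp_ofReal_mul_I, one_mul, Complex.norm_real, Real.norm_eq_abs]
    exact hreal
  refine ⟨key, ?_, ?_⟩
  · intro ω hω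
    have h := key ω hω
    set X := (↑(m * (1 + Real.cos T)) : ℂ) *
      Complex.exp (Complex.I * ((inner ℝ ((1/2 : ℝ) • (y₁ + y₂)) ω : ℝ) : ℂ))
    set E₁ := (m : ℂ) * Complex.exp (Complex.I * ((inner ℝ y₁ ω : ℝ) : ℂ))
    set E₂ := (m : ℂ) * Complex.exp (Complex.I * ((inner ℝ y₂ ω : ℝ) : ℂ))
    have e : (X - (E₁ + E₂)) / 2 = (X - E₁ - E₂) / 2 := by ring
    rw [e, norm_div, Complex.norm_two]
    linarith
  · intro ω hω
    have h := key ω hω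
    set X := (↑(m * (1 + Real.cos T)) : ℂ) *
      Complex.exp (Complex.I * ((inner ℝ ((1/2 : ℝ) • (y₁ + y₂)) ω : ℝ) : ℂ))
    set E₁ := (m : ℂ) * Complex.exp (Complex.I * ((inner ℝ y₁ ω : ℝ) : ℂ))
    set E₂ := (m : ℂ) * Complex.exp (Complex.I * ((inner ℝ y₂ ω : ℝ) : ℂ))
    have e : X - ((E₁ + E₂) + (X - (E₁ + E₂)) / 2) = (X - E₁ - E₂) / 2 := by ring
    rw [e, norm_div, Complex.norm_two]
    linarith
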